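/- Let λ>0, T>0, k∈(0,1), κ = 1−k, let a^N ≤ a^* be reals, π^N ∈ ℝ, and let π, G : ℝ → ℝ, with L(a) := π(a) − π^N; assume π, G, and L are nondecreasing on [a^N, a^*]. Let x̄ be a bounded piecewise constant plan with x̄(t) = a_m ∈ [a^N, a^*] for t ∈ [κ^m T, κ^{m−1}T), satisfying the incentive constraint G(x̄(t))·e^{−λt} ≤ ∫_{(1−k)t}^{t} L(x̄(s))·λ·e^{−λs} ds for every t ∈ (0,T]. Suppose indices i < j satisfy a_m < a_j ≤ a_i for every m with i < m < j. Define x̂ by x̂(t) = a_j for t ∈ [κ^{j−1}T, κ^i T) and x̂(t) = x̄(t) otherwise. Then x̂ satisfies the incentive constraint for every t ∈ (0,T], and V(x̂,T) ≥ V(x̄,T), where V(x,T) := π(x(T))·e^{−λT} + ∫_0^T π(x(t))·λ·e^{−λt} dt. -/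

import Mathlib

open MeasureTheory Set intervalIntegral

lemma aux_ae_ne (d : ℝ) : ∀ᵐ s : ℝ, s ≠ d := by
  have h : (volume : Measure ℝ) {d} = 0 := measure_singleton d
  rw [MeasureTheory.ae_iff]
  convert h using 2
  ext s; simp

lemma aux_intExp (lam C c d : ℝ) :
    ∫ s in c..d, C * lam * Real.exp (-lam * s)
      = C * (Real.exp (-lam * c) - Real.exp (-lam * d)) := by
  have key : ∀ s : ℝ, HasDerivAt (fun u => -C * Real.exp (-lam * u))
      (C * lam * Real.exp (-lam * s)) s := by
    intro s
    have h1 : HasDerivAt (fun u : ℝ => -lam * u) (-lam) s := by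
      simpa using (hasDerivAt_id s).const_mul (-lam)
    have h3 := h1.exp.const_mul (-C)
    have e : C * lam * Real.exp (-lam * s) = -C * (Real.exp (-lam * s) * -lam) := by ring
    rw [e]; exact h3
  rw [intervalIntegral.integral_eq_sub_of_hasDerivAt (fun s _ => key s)
    ((Continuous.mul continuous_const (Real.continuous_exp.comp (by continuity))).intervalIntegrable c d)]
  ring

lemma aux_eval {lam C c d : ℝ} {f : ℝ → ℝ} (hcd : c ≤ d)
    (h : ∀ s ∈ Set.Ico c d, f s = C * lam * Real.exp (-lam * s)) :
    ∫ s in c..d, f s = C * (Real.exp (-lam * c) - Real.exp (-lam * d)) := by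
  rw [← aux_intExp lam C c d]
  apply intervalIntegral.integral_congr_ae
  rw [Set.uIoc_of_le hcd]
  filter_upwards [aux_ae_ne d] with s hs hmem
  exact h s ⟨le_of_lt hmem.1, lt_of_le_of_ne hmem.2 hs⟩

lemma aux_ii_congr_Ico {f g : ℝ → ℝ} {c d : ℝ} (hcd : c ≤ d)
    (h : ∀ s ∈ Set.Ico c d, f s = g s) (hg : IntervalIntegrable g volume c d) :
    IntervalIntegrable f volume c d := by
  rw [intervalIntegrable_iff_integrableOn_Ioc_of_le hcd] at hg ⊢
  apply hg.congr
  filter_upwards [MeasureTheory.ae_restrict_mem measurableSet_Ioc,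
    MeasureTheory.ae_restrict_of_ae (aux_ae_ne d)] with s hs hsne
  exact (h s ⟨le_of_lt hs.1, lt_of_le_of_ne hs.2 hsne⟩).symm

lemma aux_ii {lam C c d : ℝ} {f : ℝ → ℝ} (hcd : c ≤ d)
    (h : ∀ s ∈ Set.Ico c d, f s = C * lam * Real.exp (-lam * s)) :
    IntervalIntegrable f volume c d := by
  apply aux_ii_congr_Ico hcd h
  exact (Continuous.mul continuous_const (Real.continuous_exp.comp (by continuity))).intervalIntegrable c d

/-- (Lemma 3, monotonization.) Raising a non-monotone stretch of a
bounded piecewise constant plan `x̄` (slots `[κ^m T, κ^{m-1} T)` with actions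
`a_m ∈ [a^N, a^*]`) to the constant level `a_j` on `[κ^{j-1}T, κ^i T)` preserves the
SPE incentive constraint and weakly increases the expected payoff. -/
theorem stmt_8 (lam T k : ℝ) (hlam : 0 < lam) (hT : 0 < T) (hk : k ∈ Set.Ioo (0 : ℝ) 1)
    (κ : ℝ) (hκ : κ = 1 - k) (aN aStar : ℝ) (haa : aN ≤ aStar) (πN : ℝ)
    (π G L : ℝ → ℝ) (hL : ∀ a, L a = π a - πN)
    (hπ : MonotoneOn π (Set.Icc aN aStar)) (hG : MonotoneOn G (Set.Icc aN aStar))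
    (hLmono : MonotoneOn L (Set.Icc aN aStar))
    (a : ℕ → ℝ) (ha : ∀ m, 1 ≤ m → a m ∈ Set.Icc aN aStar)
    (xbar : ℝ → ℝ)
    (hxbar : ∀ m, 1 ≤ m → ∀ t ∈ Set.Ico (κ ^ m * T) (κ ^ (m - 1) * T), xbar t = a m)
    (hIC : ∀ t ∈ Set.Ioc (0 : ℝ) T,
      G (xbar t) * Real.exp (-lam * t)
        ≤ ∫ s in ((1 - k) * t)..t, L (xbar s) * lam * Real.exp (-lam * s))
    (i j : ℕ) (hi : 1 ≤ i) (hij : i < j)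
    (hmid : ∀ m, i < m → m < j → a m < a j) (hji : a j ≤ a i)
    (xhat : ℝ → ℝ)
    (hxhat : ∀ t, xhat t = if t ∈ Set.Ico (κ ^ (j - 1) * T) (κ ^ i * T) then a j else xbar t) :
    (∀ t ∈ Set.Ioc (0 : ℝ) T,
      G (xhat t) * Real.exp (-lam * t)
        ≤ ∫ s in ((1 - k) * t)..t, L (xhat s) * lam * Real.exp (-lam * s))
    ∧ π (xbar T) * Real.exp (-lam * T)
        + (∫ t in (0 : ℝ)..T, π (xbar t) * lam * Real.exp (-lam * t))
      ≤ π (xhat T) * Real.exp (-lam * T)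
        + ∫ t in (0 : ℝ)..T, π (xhat t) * lam * Real.exp (-lam * t) := by
  obtain ⟨hk0, hk1⟩ := hk
  have hκ0 : 0 < κ := by rw [hκ]; linarith
  have hκ1 : κ < 1 := by rw [hκ]; linarith
  have hk' : (1 : ℝ) - k = κ := hκ.symm
  have hpow_le : ∀ {p q : ℕ}, p ≤ q → κ ^ q ≤ κ ^ p :=
    fun hpq => pow_le_pow_of_le_one hκ0.le hκ1.le hpq
  have hpowT_le : ∀ {p q : ℕ}, p ≤ q → κ ^ q * T ≤ κ ^ p * T :=
    fun hpq => mul_le_mul_of_nonneg_right (hpow_le hpq) hT.le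
  have hpowT_lt : ∀ {p q : ℕ}, p < q → κ ^ q * T < κ ^ p * T :=
    fun hpq => mul_lt_mul_of_pos_right (pow_lt_pow_right_of_lt_one₀ hκ0 hκ1 hpq) hT
  have hpowT_pos : ∀ p : ℕ, 0 < κ ^ p * T := fun p => mul_pos (pow_pos hκ0 p) hT
  have hpowT_leT : ∀ p : ℕ, κ ^ p * T ≤ T := fun p => by
    simpa using hpowT_le (Nat.zero_le p)
  have hpowsucc : ∀ p : ℕ, κ * (κ ^ p * T) = κ ^ (p + 1) * T := by
    intro p; rw [pow_succ']; ring
  -- slot existence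
  have slotex : ∀ s : ℝ, 0 < s → s < T →
      ∃ m : ℕ, 1 ≤ m ∧ κ ^ m * T ≤ s ∧ s < κ ^ (m - 1) * T := by
    intro s hs0 hsT
    classical
    obtain ⟨n, hn⟩ := exists_pow_lt_of_lt_one (div_pos hs0 hT) hκ1
    have hP : ∃ m : ℕ, κ ^ m * T ≤ s := ⟨n, ((lt_div_iff₀ hT).mp hn).le⟩
    have hm := Nat.find_spec hP
    have hm1 : 1 ≤ Nat.find hP := by
      by_contra h
      have h0 : Nat.find hP = 0 := by omega
      rw [h0] at hm; simp at hm; linarith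
    refine ⟨Nat.find hP, hm1, hm, ?_⟩
    have := Nat.find_min hP (m := Nat.find hP - 1) (by omega)
    exact not_le.mp this
  -- slots in the raised region
  have hslotR : ∀ s, s ∈ Set.Ico (κ ^ (j - 1) * T) (κ ^ i * T) →
      ∃ m, i < m ∧ m < j ∧ xbar s = a m := by
    intro s hs
    have hs0 : 0 < s := lt_of_lt_of_le (hpowT_pos (j - 1)) hs.1
    have hsT : s < T := lt_of_lt_of_le hs.2 (hpowT_leT i)
    obtain ⟨m, hm1, hsm1, hsm2⟩ := slotex s hs0 hsT
    have him : i < m := by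
      by_contra h; push_neg at h
      have := hpowT_le h
      linarith [hs.2]
    have hjm : m < j := by
      by_contra h; push_neg at h
      have : κ ^ (m - 1) * T ≤ κ ^ (j - 1) * T := hpowT_le (by omega)
      linarith [hs.1]
    exact ⟨m, him, hjm, hxbar m hm1 s ⟨hsm1, hsm2⟩⟩
  -- pointwise domination
  have hpt : ∀ (φ : ℝ → ℝ), MonotoneOn φ (Set.Icc aN aStar) →
      ∀ s, φ (xbar s) ≤ φ (xhat s) := by
    intro φ hφ s
    rw [hxhat s]
    split_ifs with hs
    · obtain ⟨m, him, hjm, hxs⟩ := hslotR s hs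
      rw [hxs]
      exact hφ (ha m (by omega)) (ha j (by omega)) (le_of_lt (hmid m him hjm))
    · exact le_refl _
  -- slot property of xhat
  have hxhat_slot : ∀ m, 1 ≤ m → ∀ t ∈ Set.Ico (κ ^ m * T) (κ ^ (m - 1) * T),
      xhat t = (fun m => if i < m ∧ m < j then a j else a m) m := by
    intro m hm t htm
    simp only
    rw [hxhat t]
    by_cases hc : i < m ∧ m < j
    · rw [if_pos hc, if_pos]
      exact ⟨le_trans (hpowT_le (by omega : m ≤ j - 1)) htm.1,
        lt_of_lt_of_le htm.2 (hpowT_le (by omega : i ≤ m - 1))⟩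
    · have hnot : t ∉ Set.Ico (κ ^ (j - 1) * T) (κ ^ i * T) := by
        intro hcon
        rcases (by omega : m ≤ i ∨ j ≤ m) with h | h
        · have := hpowT_le h
          linarith [htm.1, hcon.2]
        · have : κ ^ (m - 1) * T ≤ κ ^ (j - 1) * T := hpowT_le (by omega)
          linarith [htm.2, hcon.1]
      rw [if_neg hc, if_neg hnot, hxbar m hm t htm]
  -- generic integrability over slots
  have chain : ∀ (x : ℝ → ℝ) (b : ℕ → ℝ) (φ : ℝ → ℝ),
      (∀ m, 1 ≤ m → ∀ t ∈ Set.Ico (κ ^ m * T) (κ ^ (m - 1) * T), x t = b m) →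
      ∀ n : ℕ, IntervalIntegrable (fun s => φ (x s) * lam * Real.exp (-lam * s))
        volume (κ ^ n * T) T := by
    intro x b φ hx n
    induction n with
    | zero =>
      rw [pow_zero, one_mul]
    | succ n ih =>
      refine IntervalIntegrable.trans (b := κ ^ n * T) ?_ ih
      apply aux_ii (C := φ (b (n + 1))) (hpowT_le (Nat.le_succ n))
      intro s hs
      rw [hx (n + 1) (by omega) s (by simpa using hs)]
  have genInt : ∀ (x : ℝ → ℝ) (b : ℕ → ℝ) (φ : ℝ → ℝ),
      (∀ m, 1 ≤ m → ∀ t ∈ Set.Ico (κ ^ m * T) (κ ^ (m - 1) * T), x t = b m) →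
      ∀ c d : ℝ, 0 < c → c ≤ d → d ≤ T →
      IntervalIntegrable (fun s => φ (x s) * lam * Real.exp (-lam * s)) volume c d := by
    intro x b φ hx c d hc hcd hdT
    obtain ⟨n, hn⟩ := exists_pow_lt_of_lt_one (div_pos hc hT) hκ1
    have hnc : κ ^ n * T < c := (lt_div_iff₀ hT).mp hn
    apply (chain x b φ hx n).mono_set
    rw [Set.uIcc_of_le hcd, Set.uIcc_of_le (le_trans hnc.le (le_trans hcd hdT))]
    exact Set.Icc_subset_Icc hnc.le hdT
  -- exponential identity
  have hsplit : ∀ u : ℝ, Real.exp (-lam * (κ * u)) - Real.exp (-lam * u)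
      = Real.exp (-lam * u) * (Real.exp (lam * k * u) - 1) := by
    intro u
    rw [show -lam * (κ * u) = -lam * u + lam * k * u by rw [hκ]; ring, Real.exp_add]
    ring
  have hdivE : ∀ (A B u : ℝ), A * Real.exp (-lam * u) ≤ B * Real.exp (-lam * u) → A ≤ B :=
    fun A B u h => le_of_mul_le_mul_right h (Real.exp_pos _)
  constructor
  · -- incentive constraint
    intro t ht
    rw [hk']
    by_cases htR : t ∈ Set.Ico (κ ^ (j - 1) * T) (κ ^ i * T)
    · -- t in the raised region
      have ht1 : κ ^ (j - 1) * T ≤ t := htR.1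
      have ht2 : t < κ ^ i * T := htR.2
      have ht0 : 0 < t := ht.1
      have hκtt : κ * t ≤ t := by nlinarith
      have hxt : xhat t = a j := by rw [hxhat t, if_pos htR]
      have hκjt : κ ^ j * T ≤ κ * t := by
        have := mul_le_mul_of_nonneg_left ht1 hκ0.le
        calc κ ^ j * T = κ * (κ ^ (j - 1) * T) := by
              rw [hpowsucc (j - 1), show j - 1 + 1 = j by omega]
          _ ≤ κ * t := this
      have hxhat_const : ∀ s ∈ Set.Ico (κ * t) t, xhat s = a j := by
        intro s hs
        rw [hxhat s]
        by_cases hsR : s ∈ Set.Ico (κ ^ (j - 1) * T) (κ ^ i * T)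
        · rw [if_pos hsR]
        · rw [if_neg hsR]
          apply hxbar j (by omega) s
          refine ⟨le_trans hκjt hs.1, ?_⟩
          by_contra hge; push_neg at hge
          exact hsR ⟨hge, lt_trans hs.2 ht2⟩
      rw [hxt, aux_eval (C := L (a j)) hκtt
        (fun s hs => by rw [hxhat_const s hs])]
      rw [hsplit t]
      -- key inequality G (a j) ≤ L (a j) * (exp (lam*k*t) - 1)
      have hkey : G (a j) ≤ L (a j) * (Real.exp (lam * k * t) - 1) := by
        rcases le_or_gt 0 (L (a j)) with hLpos | hLneg
        · -- limit at τ = κ^(j-1) * T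
          have hjτ : κ * (κ ^ (j - 1) * T) = κ ^ j * T := by
            rw [hpowsucc (j - 1), show j - 1 + 1 = j by omega]
          have hjτlt : κ ^ j * T < κ ^ (j - 1) * T := hpowT_lt (by omega)
          have hb : ∀ u ∈ Set.Ico (κ ^ j * T) (κ ^ (j - 1) * T),
              G (a j) * Real.exp (-lam * u)
                ≤ L (a (j + 1)) * (Real.exp (-lam * (κ * u)) - Real.exp (-lam * (κ ^ j * T)))
                  + L (a j) * (Real.exp (-lam * (κ ^ j * T)) - Real.exp (-lam * u)) := by
            intro u hu
            have hu0 : 0 < u := lt_of_lt_of_le (hpowT_pos j) hu.1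
            have huT : u ≤ T := le_trans hu.2.le (hpowT_leT (j - 1))
            have hICu := hIC u ⟨hu0, huT⟩
            rw [hk'] at hICu
            rw [hxbar j (by omega) u ⟨hu.1, hu.2⟩] at hICu
            have hκu1 : κ ^ (j + 1) * T ≤ κ * u := by
              rw [← hpowsucc j]
              exact mul_le_mul_of_nonneg_left hu.1 hκ0.le
            have hκu2 : κ * u ≤ κ ^ j * T := by
              have := mul_lt_mul_of_pos_left hu.2 hκ0
              rw [hjτ] at this
              exact this.le
            have hc1 : ∀ s ∈ Set.Ico (κ * u) (κ ^ j * T),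
                L (xbar s) * lam * Real.exp (-lam * s)
                  = L (a (j + 1)) * lam * Real.exp (-lam * s) := by
              intro s hs
              rw [hxbar (j + 1) (by omega) s ⟨le_trans hκu1 hs.1, by simpa using hs.2⟩]
            have hc2 : ∀ s ∈ Set.Ico (κ ^ j * T) u,
                L (xbar s) * lam * Real.exp (-lam * s)
                  = L (a j) * lam * Real.exp (-lam * s) := by
              intro s hs
              rw [hxbar j (by omega) s ⟨hs.1, lt_trans hs.2 hu.2⟩]
            have hI1 : IntervalIntegrable
                (fun s => L (xbar s) * lam * Real.exp (-lam * s)) volume (κ * u) (κ ^ j * T) :=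
              aux_ii hκu2 hc1
            have hI2 : IntervalIntegrable
                (fun s => L (xbar s) * lam * Real.exp (-lam * s)) volume (κ ^ j * T) u :=
              aux_ii hu.1 hc2
            rw [← intervalIntegral.integral_add_adjacent_intervals hI1 hI2,
              aux_eval hκu2 hc1, aux_eval hu.1 hc2] at hICu
            linarith
          have hFτ : 0 ≤ L (a (j + 1)) * (Real.exp (-lam * (κ * (κ ^ (j - 1) * T)))
                - Real.exp (-lam * (κ ^ j * T)))
              + L (a j) * (Real.exp (-lam * (κ ^ j * T))
                - Real.exp (-lam * (κ ^ (j - 1) * T)))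
              - G (a j) * Real.exp (-lam * (κ ^ (j - 1) * T)) := by
            have hcont : Continuous (fun u : ℝ =>
                L (a (j + 1)) * (Real.exp (-lam * (κ * u)) - Real.exp (-lam * (κ ^ j * T)))
                + L (a j) * (Real.exp (-lam * (κ ^ j * T)) - Real.exp (-lam * u))
                - G (a j) * Real.exp (-lam * u)) := by
              have hE : Continuous fun u : ℝ => Real.exp (-lam * u) :=
                Real.continuous_exp.comp (continuous_const.mul continuous_id)
              have hE2 : Continuous fun u : ℝ => Real.exp (-lam * (κ * u)) :=
                Real.continuous_exp.comp (continuous_const.mul (continuous_const.mul continuous_id))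
              exact ((continuous_const.mul (hE2.sub continuous_const)).add
                (continuous_const.mul (continuous_const.sub hE))).sub
                (continuous_const.mul hE)
            apply ge_of_tendsto (x := nhdsWithin (κ ^ (j - 1) * T) (Set.Iio (κ ^ (j - 1) * T)))
              ((hcont.tendsto _).mono_left nhdsWithin_le_nhds)
            filter_upwards [Ioo_mem_nhdsLT_of_mem
              (Set.mem_Ioc.mpr ⟨hjτlt, le_refl _⟩)] with u hu
            have := hb u ⟨hu.1.le, hu.2⟩
            linarith
          rw [hjτ, sub_self, mul_zero, zero_add] at hFτ
          have h1 : G (a j) * Real.exp (-lam * (κ ^ (j - 1) * T))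
              ≤ L (a j) * (Real.exp (-lam * (κ * (κ ^ (j - 1) * T)))
                - Real.exp (-lam * (κ ^ (j - 1) * T))) := by
            rw [hjτ]; linarith
          rw [hsplit (κ ^ (j - 1) * T)] at h1
          have h2 : G (a j) ≤ L (a j) * (Real.exp (lam * k * (κ ^ (j - 1) * T)) - 1) := by
            apply hdivE _ _ (κ ^ (j - 1) * T)
            calc G (a j) * Real.exp (-lam * (κ ^ (j - 1) * T))
                ≤ L (a j) * (Real.exp (-lam * (κ ^ (j - 1) * T))
                    * (Real.exp (lam * k * (κ ^ (j - 1) * T)) - 1)) := h1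
              _ = L (a j) * (Real.exp (lam * k * (κ ^ (j - 1) * T)) - 1)
                    * Real.exp (-lam * (κ ^ (j - 1) * T)) := by ring
          refine h2.trans (mul_le_mul_of_nonneg_left ?_ hLpos)
          have : lam * k * (κ ^ (j - 1) * T) ≤ lam * k * t :=
            mul_le_mul_of_nonneg_left ht1 (mul_pos hlam hk0).le
          have := Real.exp_le_exp.mpr this
          linarith
        · -- use IC at t₀ = κ^i * T
          have hmem : κ ^ i * T ∈ Set.Ico (κ ^ i * T) (κ ^ (i - 1) * T) :=
            ⟨le_refl _, hpowT_lt (by omega)⟩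
          have hICt0 := hIC (κ ^ i * T) ⟨hpowT_pos i, hpowT_leT i⟩
          rw [hk', hxbar i hi _ hmem] at hICt0
          have hci : ∀ s ∈ Set.Ico (κ * (κ ^ i * T)) (κ ^ i * T),
              L (xbar s) * lam * Real.exp (-lam * s)
                = L (a (i + 1)) * lam * Real.exp (-lam * s) := by
            intro s hs
            apply congrArg (fun z => z * lam * Real.exp (-lam * s))
            apply congrArg L
            apply hxbar (i + 1) (by omega) s
            constructor
            · rw [← hpowsucc i]; exact hs.1
            · simpa using hs.2
          have hκi : κ * (κ ^ i * T) ≤ κ ^ i * T := by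
            nlinarith [hpowT_pos i]
          rw [aux_eval hκi hci, hsplit (κ ^ i * T)] at hICt0
          have hGij : G (a j) ≤ G (a i) := hG (ha j (by omega)) (ha i hi) hji
          have hLij : L (a (i + 1)) ≤ L (a j) := by
            rcases eq_or_lt_of_le (show i + 1 ≤ j by omega) with he | hl
            · rw [he]
            · exact hLmono (ha (i + 1) (by omega)) (ha j (by omega))
                (le_of_lt (hmid (i + 1) (by omega) hl))
          have hX0 : 0 ≤ Real.exp (-lam * (κ ^ i * T))
              * (Real.exp (lam * k * (κ ^ i * T)) - 1) := by
            have h1 : (1 : ℝ) ≤ Real.exp (lam * k * (κ ^ i * T)) :=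
              Real.one_le_exp (by positivity)
            nlinarith [Real.exp_pos (-lam * (κ ^ i * T))]
          have h2 : G (a j) ≤ L (a j) * (Real.exp (lam * k * (κ ^ i * T)) - 1) := by
            apply hdivE _ _ (κ ^ i * T)
            calc G (a j) * Real.exp (-lam * (κ ^ i * T))
                ≤ G (a i) * Real.exp (-lam * (κ ^ i * T)) :=
                  mul_le_mul_of_nonneg_right hGij (Real.exp_pos _).le
              _ ≤ L (a (i + 1)) * (Real.exp (-lam * (κ ^ i * T))
                    * (Real.exp (lam * k * (κ ^ i * T)) - 1)) := hICt0
              _ ≤ L (a j) * (Real.exp (-lam * (κ ^ i * T))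
                    * (Real.exp (lam * k * (κ ^ i * T)) - 1)) :=
                  mul_le_mul_of_nonneg_right hLij hX0
              _ = L (a j) * (Real.exp (lam * k * (κ ^ i * T)) - 1)
                    * Real.exp (-lam * (κ ^ i * T)) := by ring
          refine h2.trans ?_
          have hle : lam * k * t ≤ lam * k * (κ ^ i * T) :=
            mul_le_mul_of_nonneg_left ht2.le (mul_pos hlam hk0).le
          have := Real.exp_le_exp.mpr hle
          nlinarith
      calc G (a j) * Real.exp (-lam * t)
          ≤ L (a j) * (Real.exp (lam * k * t) - 1) * Real.exp (-lam * t) :=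
            mul_le_mul_of_nonneg_right hkey (Real.exp_pos _).le
        _ = L (a j) * (Real.exp (-lam * t) * (Real.exp (lam * k * t) - 1)) := by ring
    · -- t outside the raised region
      have hxt : xhat t = xbar t := by rw [hxhat t, if_neg htR]
      rw [hxt]
      have hκt0 : 0 < κ * t := mul_pos hκ0 ht.1
      have hκtt : κ * t ≤ t := by nlinarith [ht.1]
      calc G (xbar t) * Real.exp (-lam * t)
          ≤ ∫ s in (κ * t)..t, L (xbar s) * lam * Real.exp (-lam * s) := by
            have := hIC t ht; rwa [hk'] at this
        _ ≤ ∫ s in (κ * t)..t, L (xhat s) * lam * Real.exp (-lam * s) := by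
            apply intervalIntegral.integral_mono_on hκtt
              (genInt xbar a L hxbar (κ * t) t hκt0 hκtt ht.2)
              (genInt xhat (fun m => if i < m ∧ m < j then a j else a m) L hxhat_slot
                (κ * t) t hκt0 hκtt ht.2)
            intro s _
            exact mul_le_mul_of_nonneg_right
              (mul_le_mul_of_nonneg_right (hpt L hLmono s) hlam.le) (Real.exp_pos _).le
  · -- payoff comparison
    have hTnotR : T ∉ Set.Ico (κ ^ (j - 1) * T) (κ ^ i * T) := by
      intro hTR
      have h1 : κ ^ i * T ≤ κ ^ 1 * T := hpowT_le hi
      rw [pow_one] at h1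
      nlinarith [hTR.2]
    have hhatT : xhat T = xbar T := by rw [hxhat T, if_neg hTnotR]
    have hδ : IntervalIntegrable (fun u => π (xhat u) * lam * Real.exp (-lam * u)
        - π (xbar u) * lam * Real.exp (-lam * u)) volume 0 T := by
      have h1 : IntervalIntegrable (fun u => π (xhat u) * lam * Real.exp (-lam * u)
          - π (xbar u) * lam * Real.exp (-lam * u)) volume 0 (κ ^ (j - 1) * T) := by
        apply aux_ii_congr_Ico (hpowT_pos (j - 1)).le (g := fun _ => 0) ?_
          intervalIntegrable_const
        intro s hs
        have hxx : xhat s = xbar s := by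
          rw [hxhat s, if_neg]
          intro hsR
          exact absurd hsR.1 (not_le.mpr hs.2)
        rw [hxx]; ring
      have h2 : IntervalIntegrable (fun u => π (xhat u) * lam * Real.exp (-lam * u)
          - π (xbar u) * lam * Real.exp (-lam * u)) volume (κ ^ (j - 1) * T) (κ ^ i * T) :=
        (genInt xhat (fun m => if i < m ∧ m < j then a j else a m) π hxhat_slot
            _ _ (hpowT_pos (j - 1)) (hpowT_le (by omega)) (hpowT_leT i)).sub
          (genInt xbar a π hxbar _ _ (hpowT_pos (j - 1)) (hpowT_le (by omega)) (hpowT_leT i))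
      have h3 : IntervalIntegrable (fun u => π (xhat u) * lam * Real.exp (-lam * u)
          - π (xbar u) * lam * Real.exp (-lam * u)) volume (κ ^ i * T) T := by
        apply aux_ii_congr_Ico (hpowT_leT i) (g := fun _ => 0) ?_ intervalIntegrable_const
        intro s hs
        have hxx : xhat s = xbar s := by
          rw [hxhat s, if_neg]
          intro hsR
          exact absurd hsR.2 (not_lt.mpr hs.1)
        rw [hxx]; ring
      exact (h1.trans h2).trans h3
    by_cases hInt : IntervalIntegrable (fun u => π (xbar u) * lam * Real.exp (-lam * u))
      volume 0 T
    · have hInt2 : IntervalIntegrable (fun u => π (xhat u) * lam * Real.exp (-lam * u))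
          volume 0 T := by
        have h := hInt.add hδ
        have he : (fun u => π (xbar u) * lam * Real.exp (-lam * u)
            + (π (xhat u) * lam * Real.exp (-lam * u)
              - π (xbar u) * lam * Real.exp (-lam * u)))
            = fun u => π (xhat u) * lam * Real.exp (-lam * u) := by
          funext u; ring
        rwa [he] at h
      rw [hhatT]
      have hmono := intervalIntegral.integral_mono_on hT.le hInt hInt2 (fun u _ =>
        mul_le_mul_of_nonneg_right
          (mul_le_mul_of_nonneg_right (hpt π hπ u) hlam.le) (Real.exp_pos _).le)
      linarith
    · have hInt2 : ¬ IntervalIntegrable (fun u => π (xhat u) * lam * Real.exp (-lam * u))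
          volume 0 T := by
        intro h
        apply hInt
        have h' := h.sub hδ
        have he : (fun u => π (xhat u) * lam * Real.exp (-lam * u)
            - (π (xhat u) * lam * Real.exp (-lam * u)
              - π (xbar u) * lam * Real.exp (-lam * u)))
            = fun u => π (xbar u) * lam * Real.exp (-lam * u) := by
          funext u; ring
        rwa [he] at h'
      rw [hhatT, intervalIntegral.integral_undef hInt, intervalIntegral.integral_undef hInt2]
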